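/- (Erdős–Rado theorem) Let κ be an infinite cardinal and let A be a set of cardinality (2^κ)⁺. Then for every function c assigning to each two-element subset of A one of at most κ colors, there exists a subset H ⊆ A of cardinality κ⁺ that is homogeneous for c, i.e., c is constant on the two-element subsets of H. -/

import Mathlib

open Cardinal

universe u

section ErdosRadoAux

open Set

variable {I : Type u} [LinearOrder I] [WellFoundedLT I] {α : Type u} {γ : Type u}

/-- Transfinite iteration of a set operator along a well-order. -/
noncomputable def erSetIter (g : Set α → Set α) : I → Set α :=
  WellFoundedLT.fix fun γ ih => g (⋃ β : {β : I // β < γ}, ih β β.2)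

theorem erSetIter_eq (g : Set α → Set α) (γ : I) :
    erSetIter g γ = g (⋃ β : {β : I // β < γ}, erSetIter g (β : I)) := by
  unfold erSetIter
  apply WellFoundedLT.fix_eq (motive := fun _ => Set α) (fun γ ih => g (⋃ β : {β : I // β < γ}, ih β β.2)) γ

/-- Transfinite recursion picking elements along a well-order. -/
noncomputable def erSeq (F : Set α → α) : I → α :=
  WellFoundedLT.fix fun γ ih => F (Set.range fun β : {β : I // β < γ} => ih β β.2)

theorem erSeq_eq (F : Set α → α) (γ : I) :
    erSeq F γ = F (Set.range fun β : {β : I // β < γ} => erSeq F (β : I)) := by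
  unfold erSeq
  apply WellFoundedLT.fix_eq (motive := fun _ => α) (fun γ ih => F (Set.range fun β : {β : I // β < γ} => ih β β.2)) γ

end ErdosRadoAux

theorem erdos_rado_aux {κ : Cardinal.{u}} (hκ : ℵ₀ ≤ κ)
    {A : Type u} (hA : #A = Order.succ (2 ^ κ))
    {C : Type u} (hC : #C ≤ κ)
    (col : A → A → C) (hsym : ∀ x y, col x y = col y x) :
    ∃ H : Set A, #H = Order.succ κ ∧ ∃ c₀ : C, ∀ x ∈ H, ∀ y ∈ H, x ≠ y → col x y = c₀ := by
  classical
  set lam : Cardinal.{u} := 2 ^ κ with hlam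
  have hκlam : κ ≤ lam := (Cardinal.cantor κ).le
  have hlaminf : ℵ₀ ≤ lam := hκ.trans hκlam
  have hsucclam : Order.succ κ ≤ lam := Order.succ_le_of_lt (Cardinal.cantor κ)
  have hpow : lam ^ κ ≤ lam := by
    rw [hlam, ← Cardinal.power_mul, Cardinal.mul_eq_self hκ]
  have hκκ : κ ^ κ ≤ lam := (Cardinal.power_le_power_right hκlam).trans hpow
  haveI : Nonempty A := Cardinal.mk_ne_zero_iff.mp (by
    rw [hA]
    exact ne_of_gt (lt_of_le_of_lt zero_le (Order.lt_succ lam)))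
  set a₀ : A := Classical.arbitrary A with ha₀def
  set K : Type u := κ.out with hKdef
  have hK : #K = κ := Cardinal.mk_out κ
  -- witness function
  set wit : (K → A) → (K → C) → A := fun h f =>
    if hp : ∃ u, u ∉ Set.range h ∧ ∀ i, col (h i) u = f i then hp.choose else a₀ with hwitdef
  have hwit : ∀ (h : K → A) (f : K → C), (∃ u, u ∉ Set.range h ∧ ∀ i, col (h i) u = f i) →
      wit h f ∉ Set.range h ∧ ∀ i, col (h i) (wit h f) = f i := by
    intro h f hp
    rw [hwitdef]
    simp only [dif_pos hp]
    exact hp.choose_spec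
  -- the closure operator
  set g : Set A → Set A := fun S =>
    insert a₀ (S ∪ Set.range fun p : (K → S) × (K → C) => wit (fun i => ((p.1 i : A))) p.2)
    with hgdef
  have hgsub : ∀ S : Set A, S ⊆ g S :=
    fun S => Set.subset_union_left.trans (Set.subset_insert _ _)
  have ha₀g : ∀ S : Set A, a₀ ∈ g S := fun S => Set.mem_insert _ _
  have hgwit : ∀ (S : Set A) (h : K → A) (f : K → C), Set.range h ⊆ S →
      (∃ u, u ∉ Set.range h ∧ ∀ i, col (h i) u = f i) →
      ∃ u ∈ g S, u ∉ Set.range h ∧ ∀ i, col (h i) u = f i := by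
    intro S h f hhS hex
    refine ⟨wit h f, ?_, hwit h f hex⟩
    have hmem : wit h f ∈ Set.range fun p : (K → S) × (K → C) =>
        wit (fun i => ((p.1 i : A))) p.2 :=
      ⟨(fun i => ⟨h i, hhS (Set.mem_range_self i)⟩, f), rfl⟩
    exact Set.mem_insert_iff.mpr (Or.inr (Set.mem_union_right _ hmem))
  have hgcard : ∀ S : Set A, #S ≤ lam → #(g S) ≤ lam := by
    intro S hS
    have h1 : #(Set.range fun p : (K → S) × (K → C) =>
        wit (fun i => ((p.1 i : A))) p.2) ≤ lam := by
      refine le_trans Cardinal.mk_range_le ?_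
      rw [Cardinal.mk_prod, Cardinal.lift_id, Cardinal.lift_id,
        ← Cardinal.power_def, ← Cardinal.power_def, hK]
      refine le_trans (mul_le_mul'
        ((Cardinal.power_le_power_right hS).trans hpow)
        ((Cardinal.power_le_power_right hC).trans hκκ)) ?_
      rw [Cardinal.mul_eq_self hlaminf]
    refine le_trans Cardinal.mk_insert_le ?_
    refine le_trans (add_le_add (Cardinal.mk_union_le _ _) le_rfl) ?_
    have h2 : (1 : Cardinal) ≤ lam := le_trans Cardinal.one_le_aleph0 hlaminf
    refine le_trans (add_le_add (add_le_add hS h1) h2) ?_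
    rw [Cardinal.add_eq_self hlaminf, Cardinal.add_eq_self hlaminf]
  -- the index well-order
  set I : Type u := (Cardinal.ord (Order.succ κ)).ToType with hIdef
  have hI : #I = Order.succ κ := by rw [hIdef, Cardinal.mk_toType, Cardinal.card_ord]
  haveI : Nonempty I := Cardinal.mk_ne_zero_iff.mp (by
    rw [hI]
    exact ne_of_gt (lt_of_le_of_lt zero_le (Order.lt_succ κ)))
  have hIio : ∀ γ : I, #{β : I // β < γ} ≤ κ := by
    intro γ
    exact Order.lt_succ_iff.mp (Cardinal.mk_Iio_ord_toType γ)
  -- iteration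
  have hitercard : ∀ γ : I, #(erSetIter g γ) ≤ lam := by
    intro γ
    induction γ using WellFoundedLT.induction with
    | ind γ IH =>
      rw [erSetIter_eq]
      apply hgcard
      rcases isEmpty_or_nonempty {β : I // β < γ} with hemp | hne
      · rw [Set.iUnion_of_empty]
        simp
      · refine le_trans (Cardinal.mk_iUnion_le _) ?_
        refine le_trans (mul_le_mul' ((hIio γ).trans hκlam)
          (ciSup_le' fun β => IH β β.2)) ?_
        rw [Cardinal.mul_eq_self hlaminf]
  set Cset : Set A := ⋃ γ : I, erSetIter g γ with hCsetdef
  have hCsetcard : #Cset ≤ lam := by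
    refine le_trans (Cardinal.mk_iUnion_le _) ?_
    refine le_trans (mul_le_mul' (le_of_eq hI) (ciSup_le' fun γ => hitercard γ)) ?_
    exact le_trans (mul_le_mul' hsucclam le_rfl) (le_of_eq (Cardinal.mul_eq_self hlaminf))
  have hiterC : ∀ γ : I, erSetIter g γ ⊆ Cset := fun γ => Set.subset_iUnion _ γ
  have ha₀C : a₀ ∈ Cset :=
    hiterC (Classical.arbitrary I) (by rw [erSetIter_eq]; exact ha₀g _)
  -- choose a point outside Cset
  have hexa : ∃ a : A, a ∉ Cset := by
    by_contra hcon
    push_neg at hcon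
    have : #A ≤ #Cset := by
      rw [← Cardinal.mk_univ]
      exact Cardinal.mk_le_mk_of_subset fun x _ => hcon x
    rw [hA] at this
    exact absurd (Order.succ_le_iff.mp (this.trans hCsetcard)) (lt_irrefl lam)
  obtain ⟨a, ha⟩ := hexa
  -- the closure property
  have hCl : ∀ X : Set A, X ⊆ Cset → X.Nonempty → #X ≤ κ →
      ∃ u ∈ Cset, u ∉ X ∧ ∀ x ∈ X, col x u = col x a := by
    intro X hXC hXne hXκ
    haveI : Nonempty X := hXne.to_subtype
    obtain ⟨emb⟩ : Nonempty (X ↪ K) := by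
      rw [← Cardinal.le_def, hK]; exact hXκ
    set e : K → X := Function.invFun emb with hedef
    have he : Function.Surjective e := Function.invFun_surjective emb.injective
    set h : K → A := fun i => (e i : A) with hhdef
    have hrange : Set.range h = X := by
      ext x
      constructor
      · rintro ⟨i, rfl⟩; exact (e i).2
      · intro hx
        obtain ⟨i, hi⟩ := he ⟨x, hx⟩
        exact ⟨i, by rw [hhdef]; simp only [hi]⟩
    have hstage : ∀ x : X, ∃ γ : I, (x : A) ∈ erSetIter g γ :=
      fun x => Set.mem_iUnion.mp (hXC x.2)
    choose b hb using hstage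
    haveI : IsWellOrder I (· < ·) := ⟨⟩
    have hbound : Set.Bounded (· < ·) (Set.range b) := by
      by_contra hnb
      have hcof : IsCofinal (Set.range b) := fun x => by
        by_contra hx
        push_neg at hx
        exact hnb ⟨x, fun y hy => hx y hy⟩
      have hle := (Order.cof_le hcof).trans (le_trans Cardinal.mk_range_le hXκ)
      have hcI : Order.cof (Cardinal.ord (Order.succ κ)).ToType = Order.succ κ := by
        rw [Ordinal.cof_toType, (Cardinal.isRegular_succ hκ).cof_ord]
      exact absurd (hcI.symm.trans_le hle) (not_le.mpr (Order.lt_succ κ))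
    obtain ⟨γ₀, hγ₀⟩ := hbound
    set S₀ : Set A := ⋃ β : {β : I // β < γ₀}, erSetIter g (β : I) with hS₀def
    have hXS₀ : X ⊆ S₀ := by
      intro x hx
      exact Set.mem_iUnion.mpr ⟨⟨b ⟨x, hx⟩, hγ₀ _ (Set.mem_range_self _)⟩, hb ⟨x, hx⟩⟩
    have hexu : ∃ u, u ∉ Set.range h ∧ ∀ i, col (h i) u = col (h i) a :=
      ⟨a, by rw [hrange]; exact fun hvX => ha (hXC hvX), fun i => rfl⟩
    obtain ⟨u, huS, hunr, hucol⟩ :=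
      hgwit S₀ h (fun i => col (h i) a) (by rw [hrange]; exact hXS₀) hexu
    refine ⟨u, ?_, by rwa [hrange] at hunr, ?_⟩
    · refine hiterC γ₀ ?_
      rw [erSetIter_eq g γ₀]
      exact huS
    · intro x hx
      rw [← hrange] at hx
      obtain ⟨i, rfl⟩ := hx
      exact hucol i
  -- the recursive sequence
  set F : Set A → A := fun X =>
    if H : ∃ u, u ∈ Cset ∧ u ∉ insert a₀ X ∧ ∀ x ∈ insert a₀ X, col x u = col x a
    then H.choose else a₀ with hFdef
  have hXeq : ∀ γ : I,
      (Set.range fun β : {β : I // β < γ} => erSeq F (β : I)) = erSeq F '' Set.Iio γ := by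
    intro γ
    ext x
    constructor
    · rintro ⟨⟨β, hβ⟩, rfl⟩; exact ⟨β, hβ, rfl⟩
    · rintro ⟨β, hβ, rfl⟩; exact ⟨⟨β, hβ⟩, rfl⟩
  have key : ∀ γ : I, erSeq F γ ∈ Cset ∧ erSeq F γ ∉ insert a₀ (erSeq F '' Set.Iio γ) ∧
      ∀ x ∈ insert a₀ (erSeq F '' Set.Iio γ), col x (erSeq F γ) = col x a := by
    intro γ
    induction γ using WellFoundedLT.induction with
    | ind γ IH =>
      have hXsub : insert a₀ (erSeq F '' Set.Iio γ) ⊆ Cset := by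
        intro x hx
        rcases Set.mem_insert_iff.mp hx with rfl | ⟨β, hβ, rfl⟩
        · exact ha₀C
        · exact (IH β hβ).1
      have hXcard : #(insert a₀ (erSeq F '' Set.Iio γ) : Set A) ≤ κ := by
        refine le_trans Cardinal.mk_insert_le ?_
        have h1 : #(erSeq F '' Set.Iio γ) ≤ κ :=
          le_trans Cardinal.mk_image_le (Order.lt_succ_iff.mp (Cardinal.mk_Iio_ord_toType γ))
        have h2 : (1 : Cardinal) ≤ κ := le_trans Cardinal.one_le_aleph0 hκ
        refine le_trans (add_le_add h1 h2) ?_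
        rw [Cardinal.add_eq_self hκ]
      obtain ⟨u, hu1, hu2, hu3⟩ :=
        hCl _ hXsub ⟨a₀, Set.mem_insert _ _⟩ hXcard
      have hex' : ∃ u, u ∈ Cset ∧ u ∉ insert a₀ (erSeq F '' Set.Iio γ) ∧
          ∀ x ∈ insert a₀ (erSeq F '' Set.Iio γ), col x u = col x a := ⟨u, hu1, hu2, hu3⟩
      rw [erSeq_eq F γ, hXeq γ, hFdef]
      simp only [← hFdef, dif_pos hex']
      exact hex'.choose_spec
  have hmemX : ∀ {β γ : I}, β < γ → erSeq F β ∈ insert a₀ (erSeq F '' Set.Iio γ) :=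
    fun {β γ} h => Set.mem_insert_of_mem _ ⟨β, h, rfl⟩
  have hne : ∀ {β γ : I}, β < γ → erSeq F β ≠ erSeq F γ := by
    intro β γ h e
    exact (key γ).2.1 (e ▸ hmemX h)
  have hinj : Function.Injective (erSeq F : I → A) := by
    intro β γ e
    rcases lt_trichotomy β γ with h | h | h
    · exact absurd e (hne h)
    · exact h
    · exact absurd e.symm (hne h)
  have hcolor : ∀ {β γ : I}, β < γ → col (erSeq F β) (erSeq F γ) = col (erSeq F β) a :=
    fun {β γ} h => (key γ).2.2 _ (hmemX h)
  -- finding a big fiber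
  set gc : I → C := fun γ => col (erSeq F γ) a with hgcdef
  haveI : Nonempty C := ⟨gc (Classical.arbitrary I)⟩
  have hfib : ∃ c₀ : C, κ < #(gc ⁻¹' {c₀}) := by
    by_contra hcon
    push_neg at hcon
    have hcover : (Set.univ : Set I) = ⋃ c₀ : C, gc ⁻¹' {c₀} := by
      ext γ; simp
    have hcontr : Order.succ κ ≤ κ := by
      calc Order.succ κ = #I := hI.symm
      _ = #(Set.univ : Set I) := Cardinal.mk_univ.symm
      _ ≤ #C * ⨆ c₀ : C, #(gc ⁻¹' {c₀}) := by
          rw [hcover]; exact Cardinal.mk_iUnion_le _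
      _ ≤ κ * κ := mul_le_mul' hC (ciSup_le' fun c₀ => hcon c₀)
      _ = κ := Cardinal.mul_eq_self hκ
    exact absurd (Order.succ_le_iff.mp hcontr) (lt_irrefl κ)
  obtain ⟨c₀, hc₀⟩ := hfib
  refine ⟨erSeq F '' (gc ⁻¹' {c₀}), ?_, c₀, ?_⟩
  · rw [Cardinal.mk_image_eq hinj]
    refine le_antisymm ?_ (Order.succ_le_iff.mpr hc₀)
    refine le_trans (Cardinal.mk_le_mk_of_subset (Set.subset_univ _)) ?_
    rw [Cardinal.mk_univ, hI]
  · rintro x ⟨β, hβ, rfl⟩ y ⟨γ, hγ, rfl⟩ hxy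
    have hβ' : gc β = c₀ := hβ
    have hγ' : gc γ = c₀ := hγ
    rcases lt_trichotomy β γ with h | h | h
    · rw [hcolor h]; exact hβ'
    · exact absurd (congrArg (erSeq F) h) hxy
    · rw [hsym, hcolor h]; exact hγ'

/-- Erdős–Rado theorem: if `κ` is an infinite cardinal and `A` has cardinality `(2^κ)⁺`,
then every coloring of the two-element subsets of `A` with at most `κ` colors has a
homogeneous set of cardinality `κ⁺`. -/
theorem erdos_rado {κ : Cardinal.{u}} (hκ : ℵ₀ ≤ κ)
    {A : Type u} (hA : #A = Order.succ (2 ^ κ))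
    {C : Type u} (hC : #C ≤ κ)
    (c : {s : Finset A // s.card = 2} → C) :
    ∃ H : Set A, #H = Order.succ κ ∧
      ∀ s t : {s : Finset A // s.card = 2},
        ↑s.1 ⊆ H → ↑t.1 ⊆ H → c s = c t := by
  classical
  -- Two distinct elements of `A` exist.
  have h2 : (2 : Cardinal) ≤ #A := by
    rw [hA]
    calc (2 : Cardinal) ≤ ℵ₀ := by exact_mod_cast (Cardinal.nat_lt_aleph0 2).le
    _ ≤ κ := hκ
    _ ≤ 2 ^ κ := (Cardinal.cantor κ).le
    _ ≤ Order.succ (2 ^ κ) := le_of_lt (Order.lt_succ _)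
  obtain ⟨x₀, y₀, hxy₀⟩ := Cardinal.two_le_iff.mp h2
  set d : C := c ⟨{x₀, y₀}, Finset.card_pair hxy₀⟩ with hd
  set col : A → A → C := fun x y =>
    if h : x = y then d else c ⟨{x, y}, Finset.card_pair h⟩ with hcol
  have hcol_ne : ∀ (x y : A) (h : x ≠ y) (pf : ({x, y} : Finset A).card = 2),
      col x y = c ⟨{x, y}, pf⟩ := by
    intro x y h pf
    simp only [hcol, dif_neg h]
  have hsym : ∀ x y, col x y = col y x := by
    intro x y
    by_cases h : x = y
    · subst h; rfl
    · rw [hcol_ne x y h (Finset.card_pair h), hcol_ne y x (Ne.symm h) (Finset.card_pair (Ne.symm h))]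
      congr 1
      exact Subtype.ext (Finset.pair_comm x y)
  obtain ⟨H, hHcard, c₀, hhom⟩ := erdos_rado_aux hκ hA hC col hsym
  refine ⟨H, hHcard, ?_⟩
  have key : ∀ s : {s : Finset A // s.card = 2}, ↑s.1 ⊆ H → c s = c₀ := by
    rintro ⟨s, hs⟩ hsub
    obtain ⟨x, y, hxy, hseq⟩ := Finset.card_eq_two.mp hs
    subst hseq
    have hx : x ∈ H := hsub (by simp)
    have hy : y ∈ H := hsub (by simp)
    rw [show (⟨{x, y}, hs⟩ : {s : Finset A // s.card = 2}) = ⟨{x, y}, Finset.card_pair hxy⟩ from rfl,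
      ← hcol_ne x y hxy (Finset.card_pair hxy)]
    exact hhom x hx y hy hxy
  intro s t hsH htH
  rw [key s hsH, key t htH]
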